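/- arXiv:math-ph/0609032 — 4 statements merged into one kernel-verified Lean document; each statement's English description precedes it below -/
import Mathlib

section
/- Let H and H' be complex Hilbert spaces, U : H → H' a linear isometry (so that U*U = I on H and U U* is an orthogonal projection on H'), α ∈ (0,1), and G a bounded self-adjoint nonnegative operator on H' satisfying G² ≤ α·I in the Loewner order. Then the operator I − G U U* G on H' is invertible, and in the Loewner order on bounded self-adjoint operators on H one has U* G² U ≤ U* G (I − G U U* G)^{−1} G U ≤ (1−α)^{−1} U* G² U. -/
open ContinuousLinearMap

private lemma smul_one_nonneg' {H' : Type*} [NormedAddCommGroup H'] [InnerProductSpace ℂ H']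
    [CompleteSpace H'] {r : ℝ} (hr : 0 ≤ r) :
    (0 : H' →L[ℂ] H') ≤ (r : ℂ) • 1 := by
  have := star_mul_self_nonneg ((Real.sqrt r : ℂ) • (1 : H' →L[ℂ] H'))
  simpa [star_smul, smul_smul, Complex.conj_ofReal, ← Complex.ofReal_mul,
    Real.mul_self_sqrt hr] using this

private lemma conj_le_conj_adjoint {H H' : Type*}
    [NormedAddCommGroup H] [InnerProductSpace ℂ H] [CompleteSpace H]
    [NormedAddCommGroup H'] [InnerProductSpace ℂ H'] [CompleteSpace H']
    (V : H →L[ℂ] H') {X Y : H' →L[ℂ] H'} (h : X ≤ Y) :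
    adjoint V ∘L X ∘L V ≤ adjoint V ∘L Y ∘L V := by
  rw [ContinuousLinearMap.le_def] at h ⊢
  have := h.adjoint_conj V
  have heq : adjoint V ∘L (Y - X) ∘L V
      = adjoint V ∘L Y ∘L V - adjoint V ∘L X ∘L V := by
    rw [sub_comp, comp_sub]
  rwa [heq] at this

theorem stmt4 {H H' : Type*}
    [NormedAddCommGroup H] [InnerProductSpace ℂ H] [CompleteSpace H]
    [NormedAddCommGroup H'] [InnerProductSpace ℂ H'] [CompleteSpace H']
    (U : H →ₗᵢ[ℂ] H') (α : ℝ) (hα : α ∈ Set.Ioo (0 : ℝ) 1)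
    (G : H' →L[ℂ] H') (hGpos : G.IsPositive)
    (hG2 : G * G ≤ (α : ℂ) • (1 : H' →L[ℂ] H')) :
    IsUnit ((1 : H' →L[ℂ] H') -
        G * (U.toContinuousLinearMap ∘L adjoint U.toContinuousLinearMap) * G) ∧
    ((adjoint U.toContinuousLinearMap) ∘L (G * G) ∘L U.toContinuousLinearMap ≤
      (adjoint U.toContinuousLinearMap) ∘L
        (G * Ring.inverse ((1 : H' →L[ℂ] H') -
            G * (U.toContinuousLinearMap ∘L adjoint U.toContinuousLinearMap) * G) * G) ∘L
        U.toContinuousLinearMap) ∧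
    ((adjoint U.toContinuousLinearMap) ∘L
        (G * Ring.inverse ((1 : H' →L[ℂ] H') -
            G * (U.toContinuousLinearMap ∘L adjoint U.toContinuousLinearMap) * G) * G) ∘L
        U.toContinuousLinearMap ≤
      (((1 - α)⁻¹ : ℝ) : ℂ) •
        ((adjoint U.toContinuousLinearMap) ∘L (G * G) ∘L U.toContinuousLinearMap)) := by
  obtain ⟨hα0, hα1⟩ := hα
  set V := U.toContinuousLinearMap with hV
  have hUV : adjoint V ∘L V = 1 := by
    ext x
    refine ext_inner_right ℂ fun y => ?_
    simp only [coe_comp', Function.comp_apply, adjoint_inner_left, one_apply]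
    exact U.inner_map_map x y
  have hUVx : ∀ x, adjoint V (V x) = x := fun x => by
    have := ContinuousLinearMap.ext_iff.mp hUV x
    simpa using this
  set P : H' →L[ℂ] H' := V ∘L adjoint V with hP
  have hPstar : star P = P := by
    rw [star_eq_adjoint, hP, adjoint_comp, adjoint_adjoint]
  have hPproj : P * P = P := by
    ext x
    simp [hP, mul_def, hUVx]
  have hGsa : star G = G := by
    rw [star_eq_adjoint]; exact hGpos.isSelfAdjoint
  set T : H' →L[ℂ] H' := G * P * G with hT
  have hT0 : (0 : H' →L[ℂ] H') ≤ T := by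
    have h := star_mul_self_nonneg (P * G)
    have : star (P * G) * (P * G) = T := by
      rw [star_mul, hGsa, hPstar, hT]
      calc G * P * (P * G) = G * (P * P) * G := by noncomm_ring
        _ = G * P * G := by rw [hPproj]
    rwa [this] at h
  have hTle : T ≤ G * G := by
    rw [← sub_nonneg]
    have h := star_mul_self_nonneg ((1 - P) * G)
    have h1P : (1 - P) * (1 - P) = 1 - P := by
      rw [sub_mul, mul_sub, mul_sub, one_mul, mul_one, hPproj]; abel
    have : star ((1 - P) * G) * ((1 - P) * G) = G * G - T := by
      rw [star_mul, hGsa, star_sub, star_one, hPstar, hT]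
      calc G * (1 - P) * ((1 - P) * G) = G * ((1 - P) * (1 - P)) * G := by noncomm_ring
        _ = G * (1 - P) * G := by rw [h1P]
        _ = G * G - G * P * G := by noncomm_ring
    rwa [this] at h
  have hTα : T ≤ (α : ℂ) • 1 := hTle.trans hG2
  have hTnorm : ‖T‖ < 1 := by
    have h1 : ‖T‖ ≤ ‖(α : ℂ) • (1 : H' →L[ℂ] H')‖ :=
      CStarAlgebra.norm_le_norm_of_nonneg_of_le hT0 hTα
    have h2 : ‖(α : ℂ) • (1 : H' →L[ℂ] H')‖ ≤ α := by
      rw [norm_smul, Complex.norm_real, Real.norm_of_nonneg hα0.le]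
      have hn1 : ‖(1 : H' →L[ℂ] H')‖ ≤ 1 := by
        rw [ContinuousLinearMap.one_def]; exact norm_id_le
      calc α * ‖(1 : H' →L[ℂ] H')‖ ≤ α * 1 :=
            mul_le_mul_of_nonneg_left hn1 hα0.le
        _ = α := mul_one α
    linarith
  set u : (H' →L[ℂ] H')ˣ := Units.oneSub T hTnorm with hu
  have huval : (u : H' →L[ℂ] H') = 1 - T := rfl
  have hRinv : Ring.inverse (1 - T) = (↑u⁻¹ : H' →L[ℂ] H') :=
    NormedRing.inverse_one_sub T hTnorm
  have hone_sub : (0 : H' →L[ℂ] H') ≤ ((1 - α : ℝ) : ℂ) • 1 :=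
    smul_one_nonneg' (by linarith)
  have hsmul_eq : ((1 - α : ℝ) : ℂ) • (1 : H' →L[ℂ] H') = 1 - (α : ℂ) • 1 := by
    push_cast
    rw [sub_smul, one_smul]
  have hu0 : (0 : H' →L[ℂ] H') ≤ (u : H' →L[ℂ] H') := by
    rw [huval]
    calc (0 : H' →L[ℂ] H') ≤ ((1 - α : ℝ) : ℂ) • 1 := hone_sub
      _ = 1 - (α : ℂ) • 1 := hsmul_eq
      _ ≤ 1 - T := sub_le_sub_left hTα 1
  have hu1 : (u : H' →L[ℂ] H') ≤ 1 := by
    rw [huval]; exact sub_le_self 1 hT0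
  have hinv1 : (1 : H' →L[ℂ] H') ≤ (↑u⁻¹ : H' →L[ℂ] H') :=
    (CStarAlgebra.one_le_inv_iff_le_one hu0).mpr hu1
  -- the unit (1-α)•1
  have hcne : ((1 - α : ℝ) : ℂ) ≠ 0 := by
    simp only [ne_eq, Complex.ofReal_eq_zero]; linarith
  set v : (H' →L[ℂ] H')ˣ :=
    { val := ((1 - α : ℝ) : ℂ) • 1
      inv := (((1 - α : ℝ) : ℂ))⁻¹ • 1
      val_inv := by rw [smul_mul_smul_comm, one_mul, mul_inv_cancel₀ hcne, one_smul]
      inv_val := by rw [smul_mul_smul_comm, one_mul, inv_mul_cancel₀ hcne, one_smul] } with hv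
  have hvu : (v : H' →L[ℂ] H') ≤ (u : H' →L[ℂ] H') := by
    rw [huval]
    calc (v : H' →L[ℂ] H') = 1 - (α : ℂ) • 1 := hsmul_eq
      _ ≤ 1 - T := sub_le_sub_left hTα 1
  have hinv2 : (↑u⁻¹ : H' →L[ℂ] H') ≤ (((1 - α : ℝ) : ℂ))⁻¹ • 1 := by
    have := CStarAlgebra.inv_le_inv (a := v) (b := u) hone_sub hvu
    exact this
  -- conjugate by G
  have hGconj1 : G * G ≤ G * (↑u⁻¹ : H' →L[ℂ] H') * G := by
    have := star_left_conjugate_le_conjugate hinv1 G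
    rwa [hGsa, mul_one] at this
  have hGconj2 : G * (↑u⁻¹ : H' →L[ℂ] H') * G ≤ (((1 - α : ℝ) : ℂ))⁻¹ • (G * G) := by
    have := star_left_conjugate_le_conjugate hinv2 G
    rwa [hGsa, mul_smul_comm, mul_one, smul_mul_assoc] at this
  refine ⟨⟨u, rfl⟩, ?_, ?_⟩
  · rw [hRinv]
    exact conj_le_conj_adjoint V hGconj1
  · rw [hRinv]
    have h := conj_le_conj_adjoint V hGconj2
    have heq : adjoint V ∘L ((((1 - α : ℝ) : ℂ))⁻¹ • (G * G)) ∘L V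
        = (((1 - α)⁻¹ : ℝ) : ℂ) • (adjoint V ∘L (G * G) ∘L V) := by
      simp [smul_comp, comp_smul, Complex.ofReal_inv]
    rwa [heq] at h
end

section
/- Assume ∫₀¹ f(ar) r dr > 0 and let p > 0. Then there exist t₀ ≥ 3 and τ₀ > 0 such that w is strictly decreasing on (t₀,∞) and maps (t₀,∞) bijectively onto (0,τ₀); moreover, denoting by w^{−1} : (0,τ₀) → (t₀,∞) the inverse function and setting ρ(τ) := 1/w^{−1}(τ), for every constant c > 0 one has lim_{τ→0⁺} ρ(τ)/ρ(cτ) = 1. -/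
open Filter Topology


open MeasureTheory

/-- `f_t = ∫₀¹ f(ar) r^{t-3} dr`. -/
noncomputable def fT (a : ℝ) (f : ℝ → ℝ) (t : ℝ) : ℝ :=
  ∫ r in (0:ℝ)..1, f (a * r) * r ^ (t - 3)

/-- `w(t) = t^p · f_t² · (aκe/t)^{2t}`. -/
noncomputable def wfun (a κ p : ℝ) (f : ℝ → ℝ) (t : ℝ) : ℝ :=
  t ^ p * (fT a f t) ^ 2 * (a * κ * Real.exp 1 / t) ^ (2 * t)

section Aux
variable {a κ p : ℝ} {f : ℝ → ℝ}

lemma mem01 (ha : 0 < a) (hf01 : ∀ r ∈ Set.Icc (0 : ℝ) a, f r ∈ Set.Icc (0 : ℝ) 1)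
    {r : ℝ} (h0 : 0 ≤ r) (h1 : r ≤ 1) : 0 ≤ f (a*r) ∧ f (a*r) ≤ 1 := by
  have := hf01 (a*r) ⟨mul_nonneg ha.le h0, by nlinarith⟩
  exact ⟨this.1, this.2⟩

lemma integrand_meas (hf : Measurable f) {t : ℝ} (ht : 3 ≤ t) :
    Measurable fun r : ℝ => f (a*r) * r ^ (t-3) :=
  (hf.comp (measurable_const_mul a)).mul
    (Real.continuous_rpow_const (by linarith)).measurable

lemma integrand_bound (ha : 0 < a) (hf01 : ∀ r ∈ Set.Icc (0 : ℝ) a, f r ∈ Set.Icc (0 : ℝ) 1)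
    {t : ℝ} (ht : 3 ≤ t) {r : ℝ} (h0 : 0 ≤ r) (h1 : r ≤ 1) :
    ‖f (a*r) * r ^ (t-3)‖ ≤ 1 := by
  obtain ⟨hl, hu⟩ := mem01 ha hf01 h0 h1
  have h3 : 0 ≤ r ^ (t-3) := Real.rpow_nonneg h0 _
  have h4 : r ^ (t-3) ≤ 1 := Real.rpow_le_one h0 h1 (by linarith)
  rw [Real.norm_eq_abs, abs_of_nonneg (mul_nonneg hl h3)]
  nlinarith

lemma fT_integrableOn (ha : 0 < a) (hf : Measurable f)
    (hf01 : ∀ r ∈ Set.Icc (0 : ℝ) a, f r ∈ Set.Icc (0 : ℝ) 1)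
    {t : ℝ} (ht : 3 ≤ t) :
    IntegrableOn (fun r : ℝ => f (a*r) * r ^ (t-3)) (Set.Ioc 0 1) volume := by
  apply Measure.integrableOn_of_bounded (M := 1) (by simp)
    (integrand_meas hf ht).aestronglyMeasurable
  filter_upwards [ae_restrict_mem measurableSet_Ioc] with r hr
  exact integrand_bound ha hf01 ht hr.1.le hr.2

lemma fT_intervalIntegrable (ha : 0 < a) (hf : Measurable f)
    (hf01 : ∀ r ∈ Set.Icc (0 : ℝ) a, f r ∈ Set.Icc (0 : ℝ) 1)
    {t : ℝ} (ht : 3 ≤ t) :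
    IntervalIntegrable (fun r : ℝ => f (a*r) * r ^ (t-3)) volume 0 1 := by
  rw [intervalIntegrable_iff_integrableOn_Ioc_of_le (by norm_num)]
  exact fT_integrableOn ha hf hf01 ht

lemma fT_nonneg (ha : 0 < a) (hf01 : ∀ r ∈ Set.Icc (0 : ℝ) a, f r ∈ Set.Icc (0 : ℝ) 1)
    {t : ℝ} (ht : 3 ≤ t) : 0 ≤ fT a f t := by
  apply intervalIntegral.integral_nonneg (by norm_num)
  intro r hr
  exact mul_nonneg (mem01 ha hf01 hr.1 hr.2).1 (Real.rpow_nonneg hr.1 _)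

lemma fT_le_one (ha : 0 < a) (hf : Measurable f)
    (hf01 : ∀ r ∈ Set.Icc (0 : ℝ) a, f r ∈ Set.Icc (0 : ℝ) 1)
    {t : ℝ} (ht : 3 ≤ t) : fT a f t ≤ 1 := by
  have : fT a f t ≤ ∫ _ in (0:ℝ)..1, (1:ℝ) := by
    apply intervalIntegral.integral_mono_on (by norm_num)
      (fT_intervalIntegrable ha hf hf01 ht) (by simp [intervalIntegrable_const])
    intro r hr
    have := integrand_bound ha hf01 ht hr.1 hr.2
    rw [Real.norm_eq_abs] at this
    exact (le_abs_self _).trans this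
  simpa using this

lemma fT_anti (ha : 0 < a) (hf : Measurable f)
    (hf01 : ∀ r ∈ Set.Icc (0 : ℝ) a, f r ∈ Set.Icc (0 : ℝ) 1)
    {s t : ℝ} (hs : 3 ≤ s) (hst : s ≤ t) : fT a f t ≤ fT a f s := by
  apply intervalIntegral.integral_mono_on (by norm_num)
    (fT_intervalIntegrable ha hf hf01 (hs.trans hst)) (fT_intervalIntegrable ha hf hf01 hs)
  intro r hr
  apply mul_le_mul_of_nonneg_left _ (mem01 ha hf01 hr.1 hr.2).1
  rcases eq_or_lt_of_le hr.1 with h | h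
  · subst h
    rcases eq_or_lt_of_le (hs.trans hst) with h3 | h3
    · have : s = t := le_antisymm hst (by linarith)
      simp [this]
    · rw [Real.zero_rpow (by linarith)]
      exact Real.rpow_nonneg le_rfl _
  · exact Real.rpow_le_rpow_of_exponent_ge h hr.2 (by linarith)

lemma fT_pos (ha : 0 < a) (hf : Measurable f)
    (hf01 : ∀ r ∈ Set.Icc (0 : ℝ) a, f r ∈ Set.Icc (0 : ℝ) 1)
    (hpos : 0 < ∫ r in (0:ℝ)..1, f (a * r) * r)
    {t : ℝ} (ht : 3 ≤ t) : 0 < fT a f t := by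
  have h1 : ∀ r ∈ Set.Ioc (0:ℝ) 1, (0:ℝ) ≤ f (a*r) * r := fun r hr =>
    mul_nonneg (mem01 ha hf01 hr.1.le hr.2).1 hr.1.le
  have hint1 : IntegrableOn (fun r : ℝ => f (a*r) * r) (Set.Ioc 0 1) volume := by
    have := fT_integrableOn ha hf hf01 (t := 4) (by norm_num)
    have h43 : ((4:ℝ) - 3) = 1 := by norm_num
    simpa [h43, Real.rpow_one] using this
  have hpos' : 0 < ∫ r in Set.Ioc (0:ℝ) 1, f (a*r) * r := by
    rwa [intervalIntegral.integral_of_le (by norm_num)] at hpos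
  have hsupp : 0 < volume (Function.support (fun r : ℝ => f (a*r) * r) ∩ Set.Ioc 0 1) := by
    rw [← setIntegral_pos_iff_support_of_nonneg_ae _ hint1]
    · exact hpos'
    · filter_upwards [ae_restrict_mem measurableSet_Ioc] with r hr using h1 r hr
  have hnn : ∀ r ∈ Set.Ioc (0:ℝ) 1, (0:ℝ) ≤ f (a*r) * r ^ (t-3) := fun r hr =>
    mul_nonneg (mem01 ha hf01 hr.1.le hr.2).1 (Real.rpow_nonneg hr.1.le _)
  have : 0 < ∫ r in Set.Ioc (0:ℝ) 1, f (a*r) * r ^ (t-3) := by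
    rw [setIntegral_pos_iff_support_of_nonneg_ae _ (fT_integrableOn ha hf hf01 ht)]
    · refine lt_of_lt_of_le hsupp (measure_mono ?_)
      rintro r ⟨hr1, hr2⟩
      refine ⟨?_, hr2⟩
      simp only [Function.mem_support] at hr1 ⊢
      intro hc
      apply hr1
      rcases mul_eq_zero.1 hc with h | h
      · simp [h]
      · exact absurd h (ne_of_gt (Real.rpow_pos_of_pos hr2.1 _))
    · filter_upwards [ae_restrict_mem measurableSet_Ioc] with r hr using hnn r hr
  rwa [fT, intervalIntegral.integral_of_le (by norm_num)]



noncomputable def Gexp (A p t : ℝ) : ℝ := p * Real.log t + 2*t*(Real.log A - Real.log t)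

lemma Gexp_hasDerivAt {A p t : ℝ} (ht : 0 < t) :
    HasDerivAt (Gexp A p) (p * t⁻¹ + (2*(Real.log A - Real.log t) + 2*t*(0 - t⁻¹))) t := by
  have l1 : HasDerivAt Real.log t⁻¹ t := Real.hasDerivAt_log ht.ne'
  have d1 : HasDerivAt (fun t => p * Real.log t) (p * t⁻¹) t := l1.const_mul p
  have d2 : HasDerivAt (fun t : ℝ => 2*t) 2 t := by
    simpa using (hasDerivAt_id t).const_mul 2
  have d3 : HasDerivAt (fun t => Real.log A - Real.log t) (0 - t⁻¹) t :=
    (hasDerivAt_const t _).sub l1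
  have d4 := d2.mul d3
  exact d1.add d4

lemma Gexp_strictAntiOn {A p : ℝ} (hp : 0 < p) :
    StrictAntiOn (Gexp A p) (Set.Ici (max 1 (Real.exp (p/2 + Real.log A)))) := by
  set T₁ := max 1 (Real.exp (p/2 + Real.log A)) with hT₁
  have hT1 : (1:ℝ) ≤ T₁ := le_max_left _ _
  apply strictAntiOn_of_deriv_neg (convex_Ici _)
  · intro t ht
    have ht0 : (0:ℝ) < t := lt_of_lt_of_le (by linarith) ht
    exact (Gexp_hasDerivAt ht0).continuousAt.continuousWithinAt
  · intro t ht
    rw [interior_Ici] at ht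
    have ht1 : (1:ℝ) < t := lt_of_le_of_lt hT1 ht
    have ht0 : (0:ℝ) < t := by linarith
    rw [(Gexp_hasDerivAt ht0).deriv]
    have hlog : p/2 + Real.log A < Real.log t := by
      have := (Real.lt_log_iff_exp_lt ht0).2 (lt_of_le_of_lt (le_max_right _ _) ht)
      exact this
    have h1 : p * t⁻¹ ≤ p := by
      have : t⁻¹ ≤ 1 := by
        rw [inv_le_one_iff₀]; right; linarith
      nlinarith
    have h2 : 2*t*(0 - t⁻¹) = -2 := by field_simp; ring
    rw [h2]
    linarith

lemma Gexp_tendsto_atBot {A p : ℝ} (hp : 0 < p) : Tendsto (Gexp A p) atTop atBot := by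
  have h1 : Tendsto (fun t : ℝ => t * ((p + 2*Real.log A) - 2 * Real.log t)) atTop atBot := by
    apply Filter.Tendsto.atTop_mul_atBot₀ tendsto_id
    have h2 : Tendsto (fun t : ℝ => 2 * Real.log t) atTop atTop :=
      Real.tendsto_log_atTop.const_mul_atTop two_pos
    have h3 : Tendsto (fun t : ℝ => -(2 * Real.log t)) atTop atBot :=
      tendsto_neg_atBot_iff.2 h2
    simpa [sub_eq_add_neg] using (tendsto_atBot_add_const_left _ (p + 2*Real.log A) h3)
  apply tendsto_atBot_mono' _ _ h1
  filter_upwards [eventually_ge_atTop (1:ℝ)] with t ht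
  have hlog : Real.log t ≤ t := (Real.log_le_sub_one_of_pos (by linarith)).trans (by linarith)
  have hlog0 : 0 ≤ Real.log t := Real.log_nonneg ht
  unfold Gexp
  nlinarith [hp.le]




section Aux2
variable {a κ p : ℝ} {f : ℝ → ℝ}

lemma Apos (ha : 0 < a) (hκ : 0 < κ) : 0 < a * κ * Real.exp 1 := by positivity

lemma wfun_eq (ha : 0 < a) (hκ : 0 < κ) {t : ℝ} (ht : 0 < t) :
    wfun a κ p f t = fT a f t ^ 2 * Real.exp (Gexp (a*κ*Real.exp 1) p t) := by
  have hA := Apos ha hκ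
  have h1 : t ^ p = Real.exp (Real.log t * p) := Real.rpow_def_of_pos ht p
  have h2 : (a*κ*Real.exp 1/t) ^ (2*t)
      = Real.exp ((Real.log (a*κ*Real.exp 1) - Real.log t) * (2*t)) := by
    rw [Real.rpow_def_of_pos (div_pos hA ht), Real.log_div hA.ne' ht.ne']
  rw [wfun, h1, h2]
  have : Real.exp (Real.log t * p) * fT a f t ^ 2
      * Real.exp ((Real.log (a*κ*Real.exp 1) - Real.log t) * (2*t))
      = fT a f t ^ 2 * (Real.exp (Real.log t * p)
        * Real.exp ((Real.log (a*κ*Real.exp 1) - Real.log t) * (2*t))) := by ring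
  rw [this, ← Real.exp_add]
  congr 1
  unfold Gexp
  ring

lemma wfun_pos (ha : 0 < a) (hκ : 0 < κ) (hf : Measurable f)
    (hf01 : ∀ r ∈ Set.Icc (0 : ℝ) a, f r ∈ Set.Icc (0 : ℝ) 1)
    (hpos : 0 < ∫ r in (0:ℝ)..1, f (a * r) * r)
    {t : ℝ} (ht : 3 ≤ t) : 0 < wfun a κ p f t := by
  have ht0 : (0:ℝ) < t := by linarith
  have h1 : (0:ℝ) < t ^ p := Real.rpow_pos_of_pos ht0 _
  have h2 := fT_pos ha hf hf01 hpos ht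
  have h3 : (0:ℝ) < (a*κ*Real.exp 1/t) ^ (2*t) :=
    Real.rpow_pos_of_pos (div_pos (Apos ha hκ) ht0) _
  unfold wfun
  positivity

lemma wfun_strictAntiOn (ha : 0 < a) (hκ : 0 < κ) (hp : 0 < p) (hf : Measurable f)
    (hf01 : ∀ r ∈ Set.Icc (0 : ℝ) a, f r ∈ Set.Icc (0 : ℝ) 1)
    (hpos : 0 < ∫ r in (0:ℝ)..1, f (a * r) * r) :
    StrictAntiOn (wfun a κ p f)
      (Set.Ici (max 3 (max 1 (Real.exp (p/2 + Real.log (a*κ*Real.exp 1)))))) := by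
  set T₁ := max 1 (Real.exp (p/2 + Real.log (a*κ*Real.exp 1))) with hT₁
  intro x hx y hy hxy
  simp only [Set.mem_Ici, le_max_iff] at hx hy
  have hx3 : 3 ≤ x := le_trans (le_max_left _ _) hx
  have hy3 : 3 ≤ y := le_trans (le_max_left _ _) hy
  have hxT : x ∈ Set.Ici T₁ := le_trans (le_max_right _ _) hx
  have hyT : y ∈ Set.Ici T₁ := le_trans (le_max_right _ _) hy
  have hG : Real.exp (Gexp (a*κ*Real.exp 1) p y) < Real.exp (Gexp (a*κ*Real.exp 1) p x) :=
    Real.exp_lt_exp.2 (Gexp_strictAntiOn hp hxT hyT hxy)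
  have hfy := fT_pos ha hf hf01 hpos hy3
  have hfx := fT_nonneg ha hf01 hx3
  have hanti : fT a f y ≤ fT a f x := fT_anti ha hf hf01 hx3 hxy.le
  rw [wfun_eq ha hκ (by linarith : (0:ℝ) < x), wfun_eq ha hκ (by linarith : (0:ℝ) < y)]
  calc fT a f y ^ 2 * Real.exp (Gexp (a*κ*Real.exp 1) p y)
      < fT a f y ^ 2 * Real.exp (Gexp (a*κ*Real.exp 1) p x) := by
        apply mul_lt_mul_of_pos_left hG (by positivity)
    _ ≤ fT a f x ^ 2 * Real.exp (Gexp (a*κ*Real.exp 1) p x) := by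
        apply mul_le_mul_of_nonneg_right _ (Real.exp_nonneg _)
        exact pow_le_pow_left₀ hfy.le hanti 2

lemma wfun_tendsto_zero (ha : 0 < a) (hκ : 0 < κ) (hp : 0 < p) (hf : Measurable f)
    (hf01 : ∀ r ∈ Set.Icc (0 : ℝ) a, f r ∈ Set.Icc (0 : ℝ) 1)
    (hpos : 0 < ∫ r in (0:ℝ)..1, f (a * r) * r) :
    Tendsto (wfun a κ p f) atTop (𝓝 0) := by
  have hG : Tendsto (fun t => Real.exp (Gexp (a*κ*Real.exp 1) p t)) atTop (𝓝 0) :=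
    Real.tendsto_exp_atBot.comp (Gexp_tendsto_atBot hp)
  apply squeeze_zero' ?_ ?_ hG
  · filter_upwards [eventually_ge_atTop (3:ℝ)] with t ht
    exact (wfun_pos ha hκ hf hf01 hpos ht).le
  · filter_upwards [eventually_ge_atTop (3:ℝ)] with t ht
    rw [wfun_eq ha hκ (by linarith : (0:ℝ) < t)]
    have h1 : fT a f t ^ 2 ≤ 1 := by
      have := fT_le_one ha hf hf01 ht
      have := fT_nonneg ha hf01 ht
      nlinarith
    nlinarith [Real.exp_pos (Gexp (a*κ*Real.exp 1) p t)]

end Aux2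

section Aux3
variable {a κ p : ℝ} {f : ℝ → ℝ}

lemma fT_continuousOn (ha : 0 < a) (hf : Measurable f)
    (hf01 : ∀ r ∈ Set.Icc (0 : ℝ) a, f r ∈ Set.Icc (0 : ℝ) 1) :
    ContinuousOn (fT a f) (Set.Ici (3:ℝ)) := by
  have key : ContinuousOn
      (fun t : ℝ => ∫ r in Set.Ioc (0:ℝ) 1, f (a*r) * r ^ (t-3) ∂volume)
      (Set.Ici (3:ℝ)) := by
    apply continuousOn_of_dominated (bound := fun _ : ℝ => (1:ℝ))
    · intro t ht
      exact (integrand_meas hf ht).aestronglyMeasurable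
    · intro t ht
      filter_upwards [ae_restrict_mem measurableSet_Ioc] with r hr
      exact integrand_bound ha hf01 ht hr.1.le hr.2
    · exact integrableOn_const (by simp)
    · filter_upwards [ae_restrict_mem measurableSet_Ioc] with r hr
      have hr0 : 0 < r := hr.1
      have hc : Continuous fun t : ℝ => r ^ (t-3) := by
        have : (fun t : ℝ => r ^ (t-3)) = fun t => Real.exp (Real.log r * (t-3)) := by
          funext t; rw [Real.rpow_def_of_pos hr0]
        rw [this]; fun_prop
      exact ((continuous_const.mul hc).continuousOn)
  apply key.congr
  intro t ht
  exact intervalIntegral.integral_of_le (by norm_num)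

lemma wfun_continuousOn (ha : 0 < a) (hκ : 0 < κ) (hf : Measurable f)
    (hf01 : ∀ r ∈ Set.Icc (0 : ℝ) a, f r ∈ Set.Icc (0 : ℝ) 1) :
    ContinuousOn (wfun a κ p f) (Set.Ici (3:ℝ)) := by
  have h1 : ContinuousOn (fun t => fT a f t ^ 2 * Real.exp (Gexp (a*κ*Real.exp 1) p t))
      (Set.Ici (3:ℝ)) := by
    apply ContinuousOn.mul ((fT_continuousOn ha hf hf01).pow 2)
    apply Real.continuous_exp.comp_continuousOn
    unfold Gexp
    apply ContinuousOn.add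
    · exact continuousOn_const.mul (Real.continuousOn_log.mono (by
        intro x hx; simp only [Set.mem_compl_iff, Set.mem_singleton_iff]
        intro h; rw [h] at hx; simp at hx; linarith))
    · apply ContinuousOn.mul (continuousOn_const.mul continuousOn_id)
      apply ContinuousOn.sub continuousOn_const
      exact Real.continuousOn_log.mono (by
        intro x hx; simp only [Set.mem_compl_iff, Set.mem_singleton_iff]
        intro h; rw [h] at hx; simp at hx; linarith)
  apply h1.congr
  intro t ht
  exact wfun_eq ha hκ (by simp at ht; linarith)

end Aux3

section Aux4
variable {a κ p : ℝ} {f : ℝ → ℝ}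

lemma wfun_ratio (ha : 0 < a) (hκ : 0 < κ) (hf : Measurable f)
    (hf01 : ∀ r ∈ Set.Icc (0 : ℝ) a, f r ∈ Set.Icc (0 : ℝ) 1)
    {t u : ℝ} (ht : 3 ≤ t) (htu : t ≤ u) :
    wfun a κ p f u ≤ wfun a κ p f t * (u/t)^p * ((a*κ*Real.exp 1)/t)^(2*(u-t)) := by
  have hA := Apos ha hκ
  have ht0 : (0:ℝ) < t := by linarith
  have hu0 : (0:ℝ) < u := lt_of_lt_of_le ht0 htu
  have e1 : u ^ p = t ^ p * (u/t)^p := by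
    rw [← Real.mul_rpow ht0.le (div_nonneg hu0.le ht0.le)]
    congr 1
    field_simp
  have e2 : fT a f u ^ 2 ≤ fT a f t ^ 2 :=
    pow_le_pow_left₀ (fT_nonneg ha hf01 (ht.trans htu)) (fT_anti ha hf hf01 ht htu) 2
  have e3 : ((a*κ*Real.exp 1)/u)^(2*u)
      ≤ ((a*κ*Real.exp 1)/t)^(2*t) * ((a*κ*Real.exp 1)/t)^(2*(u-t)) := by
    rw [← Real.rpow_add (div_pos hA ht0)]
    have h2u : 2*t + 2*(u-t) = 2*u := by ring
    rw [h2u]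
    apply Real.rpow_le_rpow (by positivity) _ (by positivity)
    exact div_le_div_of_nonneg_left hA.le ht0 htu
  have hfu2 : 0 ≤ fT a f u ^ 2 := sq_nonneg _
  have htp : (0:ℝ) < t ^ p := Real.rpow_pos_of_pos ht0 _
  have hutp : (0:ℝ) ≤ (u/t) ^ p := Real.rpow_nonneg (by positivity) _
  unfold wfun
  calc u ^ p * fT a f u ^ 2 * ((a*κ*Real.exp 1)/u) ^ (2*u)
      = (t ^ p * (u/t)^p) * fT a f u ^ 2 * ((a*κ*Real.exp 1)/u) ^ (2*u) := by rw [← e1]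
    _ ≤ (t ^ p * (u/t)^p) * fT a f t ^ 2 * ((a*κ*Real.exp 1)/u) ^ (2*u) := by
        apply mul_le_mul_of_nonneg_right _ (Real.rpow_nonneg (by positivity) _)
        exact mul_le_mul_of_nonneg_left e2 (by positivity)
    _ ≤ (t ^ p * (u/t)^p) * fT a f t ^ 2
        * (((a*κ*Real.exp 1)/t)^(2*t) * ((a*κ*Real.exp 1)/t)^(2*(u-t))) := by
        apply mul_le_mul_of_nonneg_left e3 (by positivity)
    _ = (t ^ p * fT a f t ^ 2 * ((a*κ*Real.exp 1)/t)^(2*t)) * (u/t)^p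
        * ((a*κ*Real.exp 1)/t)^(2*(u-t)) := by ring

lemma wfun_key (ha : 0 < a) (hκ : 0 < κ) (hp : 0 < p) (hf : Measurable f)
    (hf01 : ∀ r ∈ Set.Icc (0 : ℝ) a, f r ∈ Set.Icc (0 : ℝ) 1)
    (hpos : 0 < ∫ r in (0:ℝ)..1, f (a * r) * r)
    {c₀ δ : ℝ} (hc₀ : 0 < c₀) (hc₁ : c₀ ≤ 1) (hδ : 0 < δ) :
    ∃ T : ℝ, 3 ≤ T ∧ ∀ t u : ℝ, T ≤ t → t ≤ u →
      c₀ * wfun a κ p f t ≤ wfun a κ p f u → u < (1+δ)*t := by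
  have hA := Apos ha hκ
  refine ⟨max (max 3 ((a*κ*Real.exp 1)*Real.exp 1)) (max p (Real.log (1/c₀)/δ + 1)),
    le_trans (le_max_left _ _) (le_max_left _ _), ?_⟩
  intro t u hTt htu hcw
  by_contra hcon
  push_neg at hcon
  have ht3 : (3:ℝ) ≤ t := le_trans (le_trans (le_max_left _ _) (le_max_left _ _)) hTt
  have htA : (a*κ*Real.exp 1)*Real.exp 1 ≤ t :=
    le_trans (le_trans (le_max_right _ _) (le_max_left _ _)) hTt
  have htp : p ≤ t := le_trans (le_trans (le_max_left _ _) (le_max_right _ _)) hTt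
  have htc : Real.log (1/c₀)/δ + 1 ≤ t :=
    le_trans (le_trans (le_max_right _ _) (le_max_right _ _)) hTt
  have ht0 : (0:ℝ) < t := by linarith
  have hu0 : (0:ℝ) < u := lt_of_lt_of_le ht0 htu
  have hs : δ*t ≤ u - t := by nlinarith
  have main := wfun_ratio (p := p) ha hκ hf hf01 ht3 htu
  have b1 : (u/t)^p ≤ Real.exp (p*((u-t)/t)) := by
    rw [Real.rpow_def_of_pos (by positivity)]
    apply Real.exp_le_exp.2
    have hlog : Real.log (u/t) ≤ u/t - 1 := Real.log_le_sub_one_of_pos (by positivity)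
    have he : u/t - 1 = (u-t)/t := by field_simp
    rw [he] at hlog
    nlinarith [hp.le]
  have b2 : ((a*κ*Real.exp 1)/t)^(2*(u-t)) ≤ Real.exp (-(2*(u-t))) := by
    rw [Real.rpow_def_of_pos (div_pos hA ht0)]
    apply Real.exp_le_exp.2
    have hlogA : Real.log ((a*κ*Real.exp 1)/t) ≤ -1 := by
      have hAe : (a*κ*Real.exp 1)/t ≤ Real.exp (-1) := by
        rw [div_le_iff₀ ht0]
        have hee : Real.exp (-1) * ((a*κ*Real.exp 1) * Real.exp 1) = a*κ*Real.exp 1 := by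
          rw [show Real.exp (-1) * ((a*κ*Real.exp 1) * Real.exp 1)
            = (a*κ*Real.exp 1) * (Real.exp (-1) * Real.exp 1) by ring, ← Real.exp_add]
          simp
        nlinarith [Real.exp_pos (-1)]
      calc Real.log ((a*κ*Real.exp 1)/t) ≤ Real.log (Real.exp (-1)) :=
            Real.log_le_log (by positivity) hAe
        _ = -1 := Real.log_exp _
    have h2s : 0 ≤ 2*(u-t) := by nlinarith
    nlinarith
  have hwt : 0 < wfun a κ p f t := wfun_pos ha hκ hf hf01 hpos ht3
  have final : wfun a κ p f u
      ≤ wfun a κ p f t * Real.exp (p*((u-t)/t) + -(2*(u-t))) := by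
    calc wfun a κ p f u
        ≤ wfun a κ p f t * (u/t)^p * ((a*κ*Real.exp 1)/t)^(2*(u-t)) := main
      _ ≤ (wfun a κ p f t * Real.exp (p*((u-t)/t))) * Real.exp (-(2*(u-t))) := by
          apply mul_le_mul (mul_le_mul_of_nonneg_left b1 hwt.le) b2
            (Real.rpow_nonneg (by positivity) _) (by positivity)
      _ = wfun a κ p f t * (Real.exp (p*((u-t)/t)) * Real.exp (-(2*(u-t)))) := by ring
      _ = wfun a κ p f t * Real.exp (p*((u-t)/t) + -(2*(u-t))) := by rw [← Real.exp_add]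
  have hexp : p*((u-t)/t) + -(2*(u-t)) ≤ -(δ*t) := by
    have h1 : p/t ≤ 1 := (div_le_one ht0).2 htp
    have hs0 : (0:ℝ) ≤ u - t := by linarith
    have he : p*((u-t)/t) = (u-t)*(p/t) := by ring
    rw [he]
    nlinarith [mul_le_mul_of_nonneg_left (show p/t - 2 ≤ -1 by linarith) hs0]
  have hlt : Real.exp (-(δ*t)) < c₀ := by
    rw [← Real.exp_log hc₀]
    apply Real.exp_lt_exp.2
    have hli : Real.log (1/c₀) = -Real.log c₀ := by rw [one_div, Real.log_inv]
    have hmul := mul_le_mul_of_nonneg_left htc hδ.le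
    rw [mul_add, mul_div_cancel₀ _ hδ.ne'] at hmul
    nlinarith
  have hfin : wfun a κ p f u < c₀ * wfun a κ p f t := by
    calc wfun a κ p f u
        ≤ wfun a κ p f t * Real.exp (p*((u-t)/t) + -(2*(u-t))) := final
      _ ≤ wfun a κ p f t * Real.exp (-(δ*t)) :=
          mul_le_mul_of_nonneg_left (Real.exp_le_exp.2 hexp) hwt.le
      _ < wfun a κ p f t * c₀ := mul_lt_mul_of_pos_left hlt hwt
      _ = c₀ * wfun a κ p f t := by ring
  linarith

end Aux4

theorem stmt5 (a κ p : ℝ) (ha : 0 < a) (hκ : 0 < κ) (hp : 0 < p)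
    (f : ℝ → ℝ) (hf : Measurable f)
    (hf01 : ∀ r ∈ Set.Icc (0 : ℝ) a, f r ∈ Set.Icc (0 : ℝ) 1)
    (hpos : 0 < ∫ r in (0:ℝ)..1, f (a * r) * r) :
    ∃ t₀ ≥ (3 : ℝ), ∃ τ₀ > (0 : ℝ),
      StrictAntiOn (wfun a κ p f) (Set.Ioi t₀) ∧
      Set.BijOn (wfun a κ p f) (Set.Ioi t₀) (Set.Ioo 0 τ₀) ∧
      ∃ winv : ℝ → ℝ,
        Set.InvOn winv (wfun a κ p f) (Set.Ioi t₀) (Set.Ioo 0 τ₀) ∧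
        ∀ c > (0 : ℝ),
          Tendsto (fun τ => (1 / winv τ) / (1 / winv (c * τ))) (𝓝[>] (0 : ℝ)) (𝓝 1) := by
  set t₀ := max 3 (max 1 (Real.exp (p/2 + Real.log (a*κ*Real.exp 1)))) with ht₀def
  have ht₀3 : (3:ℝ) ≤ t₀ := le_max_left _ _
  have hanti : StrictAntiOn (wfun a κ p f) (Set.Ici t₀) :=
    wfun_strictAntiOn ha hκ hp hf hf01 hpos
  set w := wfun a κ p f with hwdef
  set τ₀ := w t₀ with hτ₀def
  have hτ₀pos : 0 < τ₀ := wfun_pos ha hκ hf hf01 hpos ht₀3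
  -- BijOn
  have hmaps : Set.MapsTo w (Set.Ioi t₀) (Set.Ioo 0 τ₀) := by
    intro t ht
    exact ⟨wfun_pos ha hκ hf hf01 hpos (ht₀3.trans (le_of_lt ht)),
      hanti (Set.self_mem_Ici) (Set.mem_Ici.2 (le_of_lt ht)) ht⟩
  have hsurj : Set.SurjOn w (Set.Ioi t₀) (Set.Ioo 0 τ₀) := by
    intro y hy
    have hev : ∀ᶠ t in atTop, w t < y :=
      (wfun_tendsto_zero ha hκ hp hf hf01 hpos).eventually_lt_const hy.1
    obtain ⟨T, hTlt, hTge⟩ := (hev.and (eventually_ge_atTop t₀)).exists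
    have hcont : ContinuousOn w (Set.Icc t₀ T) :=
      (wfun_continuousOn ha hκ hf hf01).mono
        (fun x hx => Set.mem_Ici.2 (ht₀3.trans hx.1))
    have hy' : y ∈ Set.Icc (w T) (w t₀) := ⟨hTlt.le, hy.2.le⟩
    obtain ⟨x, hx, hxy⟩ := intermediate_value_Icc' hTge hcont hy'
    refine ⟨x, ?_, hxy⟩
    have hxne : x ≠ t₀ := by
      intro h
      rw [h] at hxy
      exact absurd hy.2 (not_lt.2 (hτ₀def.trans hxy).le)
    exact lt_of_le_of_ne hx.1 (Ne.symm hxne)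
  have hbij : Set.BijOn w (Set.Ioi t₀) (Set.Ioo 0 τ₀) :=
    ⟨hmaps, (hanti.mono Set.Ioi_subset_Ici_self).injOn, hsurj⟩
  set winv := Function.invFunOn w (Set.Ioi t₀) with hwinvdef
  have hinv : Set.InvOn winv w (Set.Ioi t₀) (Set.Ioo 0 τ₀) := hbij.invOn_invFunOn
  have hmem : ∀ y ∈ Set.Ioo (0:ℝ) τ₀, winv y ∈ Set.Ioi t₀ ∧ w (winv y) = y := by
    intro y hy
    obtain ⟨x, hx, hxy⟩ := hsurj hy
    exact ⟨Function.invFunOn_mem ⟨x, hx, hxy⟩, hinv.2 hy⟩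
  have hgt : ∀ T' : ℝ, t₀ ≤ T' → ∀ y ∈ Set.Ioo (0:ℝ) τ₀, y < w T' → T' < winv y := by
    intro T' hT' y hy hlt
    obtain ⟨hy1, hy2⟩ := hmem y hy
    by_contra hle
    push_neg at hle
    rcases lt_or_eq_of_le hle with h | h
    · have := hanti (Set.mem_Ici.2 ((le_of_lt hy1))) (Set.mem_Ici.2 hT') h
      rw [hy2] at this
      linarith
    · rw [h] at hy2; linarith
  refine ⟨t₀, ht₀3, τ₀, hτ₀pos, hanti.mono Set.Ioi_subset_Ici_self, hbij, winv, hinv, ?_⟩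
  intro c hc
  rw [Metric.tendsto_nhdsWithin_nhds]
  intro ε hε
  set δ' := min ε 1 / 2 with hδ'def
  have hδ'pos : 0 < δ' := by
    have := lt_min hε one_pos
    positivity
  have hδ'le : δ' ≤ ε/2 := by
    have := min_le_left ε 1
    rw [hδ'def]; linarith
  set c₀ := min c c⁻¹ with hc₀def
  have hc₀pos : 0 < c₀ := lt_min hc (inv_pos.2 hc)
  have hc₀le1 : c₀ ≤ 1 := by
    rcases le_total c 1 with h | h
    · exact (min_le_left _ _).trans h
    · exact (min_le_right _ _).trans (inv_le_one_of_one_le₀ h)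
  have hc₀c : c₀ ≤ c := min_le_left _ _
  have hc₀ci : c₀ ≤ c⁻¹ := min_le_right _ _
  obtain ⟨T, hT3, hkey⟩ := wfun_key ha hκ hp hf hf01 hpos hc₀pos hc₀le1 hδ'pos
  clear_value t₀ w τ₀ winv δ' c₀
  set T' := max T t₀ with hT'def
  have hT'3 : (3:ℝ) ≤ T' := hT3.trans (le_max_left _ _)
  have hwT' : 0 < w T' := by rw [hwdef]; exact wfun_pos ha hκ hf hf01 hpos hT'3
  set η := min (min τ₀ (w T')) (min (τ₀/c) (w T'/c)) with hηdef
  have hηpos : 0 < η := by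
    apply lt_min (lt_min hτ₀pos hwT') (lt_min (by positivity) (by positivity))
  refine ⟨η, hηpos, ?_⟩
  intro τ hτmem' hdist
  have hτ0 : 0 < τ := hτmem'
  rw [Real.dist_eq, sub_zero, abs_of_pos hτ0] at hdist
  have hη1 : η ≤ τ₀ := (min_le_left _ _).trans (min_le_left _ _)
  have hη2 : η ≤ w T' := (min_le_left _ _).trans (min_le_right _ _)
  have hη3 : η ≤ τ₀/c := (min_le_right _ _).trans (min_le_left _ _)
  have hη4 : η ≤ w T'/c := (min_le_right _ _).trans (min_le_right _ _)
  have hτmem : τ ∈ Set.Ioo 0 τ₀ := ⟨hτ0, lt_of_lt_of_le hdist hη1⟩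
  have hcτmem : c*τ ∈ Set.Ioo 0 τ₀ := by
    constructor
    · positivity
    · have : τ < τ₀/c := lt_of_lt_of_le hdist hη3
      rw [lt_div_iff₀ hc] at this
      nlinarith
  obtain ⟨htmem, hwt⟩ := hmem τ hτmem
  obtain ⟨ht'mem, hwt'⟩ := hmem (c*τ) hcτmem
  set t := winv τ
  set t' := winv (c*τ)
  have htT : T' < t := by
    apply hgt T' (le_max_right _ _) τ hτmem (lt_of_lt_of_le hdist hη2)
  have ht'T : T' < t' := by
    apply hgt T' (le_max_right _ _) (c*τ) hcτmem
    have : τ < w T'/c := lt_of_lt_of_le hdist hη4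
    rw [lt_div_iff₀ hc] at this
    nlinarith
  clear_value T' t t'
  have ht3 : (3:ℝ) ≤ t := hT'3.trans htT.le
  have ht'3 : (3:ℝ) ≤ t' := hT'3.trans ht'T.le
  have ht0 : (0:ℝ) < t := by linarith
  have ht'0 : (0:ℝ) < t' := by linarith
  have hratio : (1/t)/(1/t') = t'/t := by
    rw [one_div, one_div, div_eq_mul_inv, inv_inv, mul_comm, ← div_eq_mul_inv]
  rw [hratio, Real.dist_eq]
  have habs : t'/t - 1 = (t' - t)/t := by field_simp
  rw [habs, abs_div, abs_of_pos ht0, div_lt_iff₀ ht0]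
  rcases le_total t t' with hle | hle
  · have hcase : t' < (1+δ')*t := by
      apply hkey t t' (le_trans (show T ≤ T' by rw [hT'def]; exact le_max_left _ _) htT.le) hle
      rw [← hwdef, hwt, hwt']
      have : c₀ * τ ≤ c * τ := mul_le_mul_of_nonneg_right hc₀c hτ0.le
      linarith
    rw [abs_of_nonneg (by linarith : (0:ℝ) ≤ t' - t)]
    have h4 : δ' * t ≤ ε/2 * t := mul_le_mul_of_nonneg_right hδ'le ht0.le
    have h5 : 0 < ε * t := mul_pos hε ht0
    linarith
  · have hcase : t < (1+δ')*t' := by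
      apply hkey t' t (le_trans (show T ≤ T' by rw [hT'def]; exact le_max_left _ _) ht'T.le) hle
      rw [← hwdef, hwt, hwt']
      have h1 : c₀ * (c*τ) ≤ c⁻¹ * (c*τ) := mul_le_mul_of_nonneg_right hc₀ci (by positivity)
      have h2 : c⁻¹ * (c*τ) = τ := by field_simp
      linarith
    rw [abs_of_nonpos (by linarith : t' - t ≤ (0:ℝ)), neg_sub]
    have h3 : δ' * t' ≤ δ' * t := mul_le_mul_of_nonneg_left hle hδ'pos.le
    have h4 : δ' * t ≤ ε/2 * t := mul_le_mul_of_nonneg_right hδ'le ht0.le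
    have h5 : 0 < ε * t := mul_pos hε ht0
    linarith
end Aux
end

section
/- For all integers m, n, k with 0 ≤ m ≤ n and k ≥ 0, (1/2π) ∫₀^{2π} (cos t)^m (cos t − 1)^k e^{int} dt = (−1)^{k+n+m} Σ_{l=0}^{⌊(k−n+m)/2⌋} 2^{−(2l+n)} · C(k, 2l+n−m) · C(2l+n, l), where C(·,·) denotes the binomial coefficient and the sum is understood to be 0 when k < n − m. -/
open Finset

noncomputable def coefC (m k a b : ℕ) : ℂ :=
  ((2:ℂ) ^ (m + a))⁻¹ * (Nat.choose k a : ℂ) * (-1) ^ (k - a) * (Nat.choose (m + a) b : ℂ)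

lemma integral_exp_I (j : ℤ) :
    (∫ t in (0:ℝ)..(2 * Real.pi), Complex.exp ((Complex.I * (j:ℂ)) * (t:ℝ))) =
      if j = 0 then (2 * Real.pi : ℂ) else 0 := by
  rcases eq_or_ne j 0 with h | h
  · simp [h]
  · rw [if_neg h]
    have hc : Complex.I * (j : ℂ) ≠ 0 :=
      mul_ne_zero Complex.I_ne_zero (Int.cast_ne_zero.mpr h)
    rw [integral_exp_mul_complex hc]
    have h1 : Complex.exp (Complex.I * (j:ℂ) * ((2 * Real.pi : ℝ) : ℂ)) = 1 := by
      rw [show Complex.I * (j:ℂ) * ((2 * Real.pi : ℝ) : ℂ)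
          = (j : ℂ) * (2 * (Real.pi : ℂ) * Complex.I) by push_cast; ring]
      exact Complex.exp_int_mul_two_pi_mul_I j
    rw [show (((0:ℝ)):ℂ) = 0 by norm_num, mul_zero, Complex.exp_zero, h1, sub_self, zero_div]

lemma pointwise (m n k : ℕ) (t : ℝ) :
    ((Real.cos t : ℂ)) ^ m * ((Real.cos t : ℂ) - 1) ^ k *
        Complex.exp (Complex.I * ((n : ℂ) * (t : ℂ))) =
      ∑ a ∈ range (k+1), ∑ b ∈ range (k+m+1),
        coefC m k a b *
          Complex.exp ((Complex.I * ((2*(b:ℤ) + n - (m + a) : ℤ) : ℂ)) * (t:ℝ)) := by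
  set z : ℂ := Complex.exp (Complex.I * t) with hzdef
  have hz : z ≠ 0 := Complex.exp_ne_zero _
  have hzpow : ∀ j : ℤ, Complex.exp ((Complex.I * (j:ℂ)) * (t:ℝ)) = z ^ j := by
    intro j
    rw [show (Complex.I * (j:ℂ)) * (t:ℝ) = (j:ℂ) * (Complex.I * t) by ring,
      Complex.exp_int_mul]
  have hcos : (Real.cos t : ℂ) = (z + z⁻¹) / 2 := by
    rw [Complex.ofReal_cos, Complex.cos,
      show (t:ℂ) * Complex.I = Complex.I * t from mul_comm _ _,
      show -((t:ℂ)) * Complex.I = -(Complex.I * t) by ring, Complex.exp_neg]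
  have hzn : Complex.exp (Complex.I * ((n : ℂ) * (t : ℂ))) = z ^ (n:ℤ) := by
    rw [show Complex.I * ((n : ℂ) * (t : ℂ)) = (Complex.I * (((n:ℤ)):ℂ)) * (t:ℝ) by
      push_cast; ring, hzpow]
  rw [hcos, hzn]
  have hsub : ((z + z⁻¹) / 2 - 1) ^ k
      = ∑ a ∈ range (k+1), ((z + z⁻¹)/2) ^ a * (-1:ℂ) ^ (k - a) * (Nat.choose k a : ℂ) := by
    rw [show (z + z⁻¹) / 2 - 1 = (z + z⁻¹)/2 + (-1) by ring, add_pow]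
  rw [hsub, Finset.mul_sum, Finset.sum_mul]
  refine Finset.sum_congr rfl fun a ha => ?_
  rw [mem_range, Nat.lt_succ_iff] at ha
  have key : ((z + z⁻¹))^(m+a) * z^(n:ℤ)
      = ∑ b ∈ range (m+a+1), (Nat.choose (m+a) b : ℂ)
          * z ^ (2*(b:ℤ) + n - (m + a) : ℤ) := by
    rw [add_pow, Finset.sum_mul]
    refine Finset.sum_congr rfl fun b hb => ?_
    rw [mem_range, Nat.lt_succ_iff] at hb
    have h1 : (z⁻¹)^(m+a-b) = z ^ (-(((m+a-b):ℕ):ℤ)) := by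
      rw [inv_pow, ← zpow_natCast, ← zpow_neg]
    rw [h1, ← zpow_natCast z b,
      show z^(b:ℤ) * z^(-(((m+a-b):ℕ):ℤ)) * ((Nat.choose (m+a) b : ℕ):ℂ) * z^(n:ℤ)
        = ((Nat.choose (m+a) b : ℕ):ℂ) * (z^(b:ℤ) * z^(-(((m+a-b):ℕ):ℤ)) * z^(n:ℤ)) by ring,
      ← zpow_add₀ hz, ← zpow_add₀ hz]
    congr 2
    push_cast [Nat.cast_sub hb]
    ring
  have hterm : ((z + z⁻¹)/2)^m * (((z + z⁻¹)/2)^a * (-1:ℂ)^(k-a) * (Nat.choose k a : ℂ))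
      * z^(n:ℤ)
      = ((2:ℂ)^(m+a))⁻¹ * ((-1:ℂ)^(k-a) * (Nat.choose k a : ℂ))
          * (((z + z⁻¹))^(m+a) * z^(n:ℤ)) := by
    rw [div_pow, div_pow, pow_add, pow_add]
    field_simp
  rw [hterm, key, Finset.mul_sum]
  have hstep : ∀ b ∈ range (m+a+1),
      ((2:ℂ)^(m+a))⁻¹ * ((-1:ℂ)^(k-a) * (Nat.choose k a : ℂ))
        * ((Nat.choose (m+a) b : ℂ) * z ^ (2*(b:ℤ) + n - (m + a) : ℤ))
      = coefC m k a b * z ^ (2*(b:ℤ) + n - (m + a) : ℤ) := by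
    intro b _
    unfold coefC
    ring
  rw [Finset.sum_congr rfl hstep]
  rw [Finset.sum_subset (Finset.range_subset_range.mpr (by omega) : range (m+a+1) ⊆ range (k+m+1))]
  · refine Finset.sum_congr rfl fun b _ => ?_
    rw [hzpow]
  · intro b _ hb
    rw [mem_range, Nat.lt_succ_iff, not_le] at hb
    simp [coefC, Nat.choose_eq_zero_of_lt hb]

theorem stmt13 (m n k : ℕ) (hmn : m ≤ n) :
    (1 / (2 * Real.pi) : ℂ) *
      ∫ t in (0:ℝ)..(2 * Real.pi),
        ((Real.cos t : ℂ)) ^ m * ((Real.cos t : ℂ) - 1) ^ k *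
          Complex.exp (Complex.I * ((n : ℂ) * (t : ℂ))) =
    ((((-1 : ℝ) ^ (k + n + m)) *
      (if n ≤ k + m then
        ∑ l ∈ Finset.range ((k + m - n) / 2 + 1),
          ((2 : ℝ) ^ (2 * l + n))⁻¹ * (Nat.choose k (2 * l + n - m) : ℝ) *
            (Nat.choose (2 * l + n) l : ℝ)
      else 0) : ℝ) : ℂ) := by
  have hπ : (2 * (Real.pi:ℂ)) ≠ 0 := by
    simp [Real.pi_ne_zero, Complex.ofReal_ne_zero]
  rw [intervalIntegral.integral_congr
    (g := fun t : ℝ => ∑ p ∈ range (k+1) ×ˢ range (k+m+1),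
      coefC m k p.1 p.2 *
        Complex.exp ((Complex.I * ((2*(p.2:ℤ) + n - (m + p.1) : ℤ):ℂ)) * (t:ℝ)))
    (fun t _ => by rw [pointwise m n k t, ← Finset.sum_product'])]
  rw [intervalIntegral.integral_finset_sum (fun p _ =>
    (Continuous.intervalIntegrable (by fun_prop) _ _))]
  have hint : ∀ p ∈ range (k+1) ×ˢ range (k+m+1),
      (∫ t in (0:ℝ)..(2*Real.pi), coefC m k p.1 p.2 *
        Complex.exp ((Complex.I * ((2*(p.2:ℤ) + n - (m + p.1) : ℤ):ℂ)) * (t:ℝ)))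
      = coefC m k p.1 p.2 *
          (if (2*(p.2:ℤ) + n - (m + p.1) : ℤ) = 0 then (2 * Real.pi : ℂ) else 0) := by
    intro p _
    rw [intervalIntegral.integral_const_mul, integral_exp_I]
  rw [Finset.sum_congr rfl hint, Finset.mul_sum]
  have hite : ∀ p ∈ range (k+1) ×ˢ range (k+m+1),
      (1 / (2 * Real.pi) : ℂ) * (coefC m k p.1 p.2 *
        (if (2*(p.2:ℤ) + n - (m + p.1) : ℤ) = 0 then (2 * Real.pi : ℂ) else 0))
      = if (2*(p.2:ℤ) + n - (m + p.1) : ℤ) = 0 then coefC m k p.1 p.2 else 0 := by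
    intro p _
    split_ifs
    · field_simp
    · ring
  rw [Finset.sum_congr rfl hite, Finset.sum_ite, Finset.sum_const_zero, add_zero]
  -- now the combinatorial identity
  by_cases hnk : n ≤ k + m
  · rw [if_pos hnk]
    push_cast
    rw [Finset.mul_sum]
    refine Finset.sum_nbij' (fun p => p.2) (fun l => (2*l + n - m, l)) ?_ ?_ ?_ ?_ ?_
    · intro p hp
      simp only [mem_filter, mem_product, mem_range] at hp
      simp only [mem_range]
      omega
    · intro l hl
      simp only [mem_range] at hl
      simp only [mem_filter, mem_product, mem_range]
      refine ⟨⟨by omega, by omega⟩, by omega⟩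
    · intro p hp
      simp only [mem_filter, mem_product, mem_range] at hp
      have : 2 * p.2 + n - m = p.1 := by omega
      exact Prod.ext this rfl
    · intro l hl
      rfl
    · intro p hp
      simp only [mem_filter, mem_product, mem_range] at hp
      obtain ⟨⟨ha, hb⟩, hJ⟩ := hp
      have hab : 2 * p.2 + n = m + p.1 := by omega
      have hchoose : 2 * p.2 + n - m = p.1 := by omega
      have hpow2 : m + p.1 = 2 * p.2 + n := hab.symm
      have hsign : ((-1:ℂ)) ^ (k - p.1) = (-1:ℂ) ^ (k + n + m) := by
        rw [neg_one_pow_eq_pow_mod_two, neg_one_pow_eq_pow_mod_two (n := k + n + m)]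
        congr 1
        omega
      unfold coefC
      rw [hchoose, hpow2, hsign]
      ring
  · rw [if_neg hnk]
    have : (range (k+1) ×ˢ range (k+m+1)).filter
        (fun p => (2*(p.2:ℤ) + n - (m + p.1) : ℤ) = 0) = ∅ := by
      rw [Finset.filter_eq_empty_iff]
      intro p hp
      simp only [mem_product, mem_range] at hp
      omega
    rw [this, Finset.sum_empty]
    simp
end

section
/- For all integers n ≥ 2, m ∈ {0,1,2} and k ≥ 0, Σ_{l=0}^{⌊k/2⌋} 2^{−n−2l} · C(k+n−m, 2l+n−m) · C(2l+n, l) ≤ e^{1/4} · (k+n−m)! · n² · (k+1)² / (2^n · n!). -/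
lemma aux14 (n m k l : ℕ) (hn : 2 ≤ n) (hm : m ≤ 2) (hl : 2 * l ≤ k) :
    Nat.choose (k + n - m) (2 * l + n - m) * Nat.choose (2 * l + n) l *
      (Nat.factorial l * Nat.factorial n) ≤
    Nat.factorial (k + n - m) * (n ^ 2 * (k + 1) ^ 2) := by
  obtain ⟨n', rfl⟩ : ∃ n', n = n' + 2 := ⟨n - 2, by omega⟩
  have h1 : Nat.choose (2 * l + (n' + 2)) l * (Nat.factorial l * Nat.factorial (l + (n' + 2)))
      = Nat.factorial (2 * l + (n' + 2)) := by
    have := Nat.choose_mul_factorial_mul_factorial (show l ≤ 2 * l + (n' + 2) by omega)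
    rw [show 2 * l + (n' + 2) - l = l + (n' + 2) by omega] at this
    linarith [this]
  have h2 : Nat.factorial (2 * l + (n' + 2)) ≤
      Nat.factorial (2 * l + (n' + 2) - m) * (2 * l + (n' + 2)) ^ m := by
    interval_cases m
    · simp
    · rw [show 2 * l + (n' + 2) - 1 = 2 * l + n' + 1 by omega,
        show 2 * l + (n' + 2) = (2 * l + n' + 1) + 1 by omega, Nat.factorial_succ]
      nlinarith [Nat.factorial_pos (2 * l + n' + 1)]
    · rw [show 2 * l + (n' + 2) - 2 = 2 * l + n' by omega,
        show 2 * l + (n' + 2) = (2 * l + n') + 1 + 1 by omega, Nat.factorial_succ,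
        Nat.factorial_succ]
      nlinarith [Nat.factorial_pos (2 * l + n')]
  have h3 : Nat.choose (k + (n' + 2) - m) (2 * l + (n' + 2) - m) *
      Nat.factorial (2 * l + (n' + 2) - m) ≤ Nat.factorial (k + (n' + 2) - m) := by
    have h := Nat.choose_mul_factorial_mul_factorial
      (show 2 * l + (n' + 2) - m ≤ k + (n' + 2) - m by omega)
    calc Nat.choose (k + (n' + 2) - m) (2 * l + (n' + 2) - m) *
        Nat.factorial (2 * l + (n' + 2) - m)
        ≤ Nat.choose (k + (n' + 2) - m) (2 * l + (n' + 2) - m) *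
          Nat.factorial (2 * l + (n' + 2) - m) *
          Nat.factorial (k + (n' + 2) - m - (2 * l + (n' + 2) - m)) :=
        Nat.le_mul_of_pos_right _ (Nat.factorial_pos _)
      _ = Nat.factorial (k + (n' + 2) - m) := h
  have h4 : (2 * l + (n' + 2)) ^ m ≤ (n' + 2) ^ 2 * (k + 1) ^ 2 := by
    have hb : 2 * l + (n' + 2) ≤ (n' + 2) * (k + 1) := by nlinarith
    calc (2 * l + (n' + 2)) ^ m ≤ (2 * l + (n' + 2)) ^ 2 :=
        Nat.pow_le_pow_right (by omega) hm
      _ ≤ ((n' + 2) * (k + 1)) ^ 2 := Nat.pow_le_pow_left hb 2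
      _ = (n' + 2) ^ 2 * (k + 1) ^ 2 := by ring
  have h5 : Nat.factorial (n' + 2) ≤ Nat.factorial (l + (n' + 2)) :=
    Nat.factorial_le (by omega)
  calc Nat.choose (k + (n' + 2) - m) (2 * l + (n' + 2) - m) * Nat.choose (2 * l + (n' + 2)) l *
      (Nat.factorial l * Nat.factorial (n' + 2))
      ≤ Nat.choose (k + (n' + 2) - m) (2 * l + (n' + 2) - m) * Nat.choose (2 * l + (n' + 2)) l *
        (Nat.factorial l * Nat.factorial (l + (n' + 2))) := by
        apply Nat.mul_le_mul_left
        exact Nat.mul_le_mul_left _ h5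
    _ = Nat.choose (k + (n' + 2) - m) (2 * l + (n' + 2) - m) *
        Nat.factorial (2 * l + (n' + 2)) := by rw [mul_assoc, h1]
    _ ≤ Nat.choose (k + (n' + 2) - m) (2 * l + (n' + 2) - m) *
        (Nat.factorial (2 * l + (n' + 2) - m) * (2 * l + (n' + 2)) ^ m) :=
        Nat.mul_le_mul_left _ h2
    _ = Nat.choose (k + (n' + 2) - m) (2 * l + (n' + 2) - m) *
        Nat.factorial (2 * l + (n' + 2) - m) * (2 * l + (n' + 2)) ^ m := by ring
    _ ≤ Nat.factorial (k + (n' + 2) - m) * (2 * l + (n' + 2)) ^ m :=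
        Nat.mul_le_mul_right _ h3
    _ ≤ Nat.factorial (k + (n' + 2) - m) * ((n' + 2) ^ 2 * (k + 1) ^ 2) :=
        Nat.mul_le_mul_left _ h4

theorem stmt14 (n m k : ℕ) (hn : 2 ≤ n) (hm : m ≤ 2) :
    ∑ l ∈ Finset.range (k / 2 + 1),
        ((2 : ℝ) ^ (n + 2 * l))⁻¹ * (Nat.choose (k + n - m) (2 * l + n - m) : ℝ) *
          (Nat.choose (2 * l + n) l : ℝ) ≤
      Real.exp (1 / 4) * (Nat.factorial (k + n - m) : ℝ) * (n : ℝ) ^ 2 * ((k : ℝ) + 1) ^ 2 /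
        ((2 : ℝ) ^ n * (Nat.factorial n : ℝ)) := by
  set C : ℝ := (Nat.factorial (k + n - m) : ℝ) * (n : ℝ) ^ 2 * ((k : ℝ) + 1) ^ 2 /
    ((2 : ℝ) ^ n * (Nat.factorial n : ℝ)) with hC
  have hCnn : 0 ≤ C := by positivity
  have key : ∀ l ∈ Finset.range (k / 2 + 1),
      ((2 : ℝ) ^ (n + 2 * l))⁻¹ * (Nat.choose (k + n - m) (2 * l + n - m) : ℝ) *
        (Nat.choose (2 * l + n) l : ℝ) ≤ C * ((1 / 4 : ℝ) ^ l / Nat.factorial l) := by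
    intro l hl
    rw [Finset.mem_range] at hl
    have hl2 : 2 * l ≤ k := by omega
    have hnat := aux14 n m k l hn hm hl2
    have hcast : (Nat.choose (k + n - m) (2 * l + n - m) : ℝ) * (Nat.choose (2 * l + n) l : ℝ) *
        ((Nat.factorial l : ℝ) * (Nat.factorial n : ℝ)) ≤
        (Nat.factorial (k + n - m) : ℝ) * ((n : ℝ) ^ 2 * ((k : ℝ) + 1) ^ 2) := by
      exact_mod_cast hnat
    have e1 : ((2 : ℝ) ^ (n + 2 * l))⁻¹ * (Nat.choose (k + n - m) (2 * l + n - m) : ℝ) *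
        (Nat.choose (2 * l + n) l : ℝ) =
        ((Nat.choose (k + n - m) (2 * l + n - m) : ℝ) * (Nat.choose (2 * l + n) l : ℝ)) /
          ((2 : ℝ) ^ n * 4 ^ l) := by
      have h4 : ((2 : ℝ) ^ 2) = 4 := by norm_num
      rw [pow_add, pow_mul, h4]
      ring
    have e2 : C * ((1 / 4 : ℝ) ^ l / Nat.factorial l) =
        ((Nat.factorial (k + n - m) : ℝ) * ((n : ℝ) ^ 2 * ((k : ℝ) + 1) ^ 2)) /
          (((2 : ℝ) ^ n * (Nat.factorial n : ℝ)) * (4 ^ l * (Nat.factorial l : ℝ))) := by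
      rw [hC, one_div, inv_pow]
      have hfn : (Nat.factorial n : ℝ) ≠ 0 := by positivity
      have hfl : (Nat.factorial l : ℝ) ≠ 0 := by positivity
      field_simp
    rw [e1, e2, div_le_div_iff₀ (by positivity) (by positivity)]
    calc (Nat.choose (k + n - m) (2 * l + n - m) : ℝ) * (Nat.choose (2 * l + n) l : ℝ) *
        (((2 : ℝ) ^ n * (Nat.factorial n : ℝ)) * (4 ^ l * (Nat.factorial l : ℝ)))
        = ((Nat.choose (k + n - m) (2 * l + n - m) : ℝ) * (Nat.choose (2 * l + n) l : ℝ) *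
            ((Nat.factorial l : ℝ) * (Nat.factorial n : ℝ))) * ((2 : ℝ) ^ n * 4 ^ l) := by
          ring
      _ ≤ ((Nat.factorial (k + n - m) : ℝ) * ((n : ℝ) ^ 2 * ((k : ℝ) + 1) ^ 2)) *
            ((2 : ℝ) ^ n * 4 ^ l) := by
          exact mul_le_mul_of_nonneg_right hcast (by positivity)
  calc ∑ l ∈ Finset.range (k / 2 + 1),
      ((2 : ℝ) ^ (n + 2 * l))⁻¹ * (Nat.choose (k + n - m) (2 * l + n - m) : ℝ) *
        (Nat.choose (2 * l + n) l : ℝ)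
      ≤ ∑ l ∈ Finset.range (k / 2 + 1), C * ((1 / 4 : ℝ) ^ l / Nat.factorial l) :=
        Finset.sum_le_sum key
    _ = C * ∑ l ∈ Finset.range (k / 2 + 1), (1 / 4 : ℝ) ^ l / Nat.factorial l := by
        rw [Finset.mul_sum]
    _ ≤ C * Real.exp (1 / 4) :=
        mul_le_mul_of_nonneg_left (Real.sum_le_exp_of_nonneg (by norm_num) _) hCnn
    _ = Real.exp (1 / 4) * (Nat.factorial (k + n - m) : ℝ) * (n : ℝ) ^ 2 * ((k : ℝ) + 1) ^ 2 /
        ((2 : ℝ) ^ n * (Nat.factorial n : ℝ)) := by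
        rw [hC]; ring
end
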